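/- Let σ₁ < σ₂ be real numbers, let q : ℝ → ℝ, and let u, v : ℝ → ℝ be twice differentiable functions satisfying u'' + q·u = 0 and v'' + q·v = 0 on (σ₁,σ₂), whose Wronskian u·v' − u'·v is equal to a constant W > 0 on (σ₁,σ₂). Assume moreover that q is differentiable (so that the expression below makes sense) and set p(t) = W/((u(t))² + (v(t))²). Then p satisfies Kummer's equation relative to q on (σ₁,σ₂): q(t) − (p(t))² − (1/2)·p''(t)/p(t) + (3/4)·(p'(t)/p(t))² = 0 for all t ∈ (σ₁,σ₂). -/

import Mathlib

open Real Set


private lemma kummer_algebra (a b a1 b1 qq W : ℝ) (hS : a^2+b^2 ≠ 0) (hW : W ≠ 0)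
    (key : (a1^2+b1^2)*(a^2+b^2) - (a*a1+b*b1)^2 = W^2) :
    qq - (W/(a^2+b^2))^2
    - (1/2)*(( -(W*(2*a1*a1 + 2*a*(-(qq*a)) + 2*b1*b1 + 2*b*(-(qq*b)))) * (a^2+b^2)^2
      - -(W*(2*a*a1+2*b*b1)) * (2*(a^2+b^2)*(2*a*a1+2*b*b1)) ) / ((a^2+b^2)^2)^2 / (W/(a^2+b^2)))
    + (3/4)*((-(W*(2*a*a1+2*b*b1))/(a^2+b^2)^2)/(W/(a^2+b^2)))^2 = 0 := by
  have e1 : (-(W*(2*a*a1+2*b*b1))/(a^2+b^2)^2)/(W/(a^2+b^2)) = -(2*a*a1+2*b*b1)/(a^2+b^2) := by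
    field_simp
  have e2 : ( -(W*(2*a1*a1 + 2*a*(-(qq*a)) + 2*b1*b1 + 2*b*(-(qq*b)))) * (a^2+b^2)^2
      - -(W*(2*a*a1+2*b*b1)) * (2*(a^2+b^2)*(2*a*a1+2*b*b1)) ) / ((a^2+b^2)^2)^2 / (W/(a^2+b^2))
      = (-(2*a1*a1 + 2*a*(-(qq*a)) + 2*b1*b1 + 2*b*(-(qq*b)))*(a^2+b^2)
         + 2*(2*a*a1+2*b*b1)^2) / (a^2+b^2)^2 := by
    field_simp; ring
  rw [e1, e2]
  field_simp
  linear_combination 4 * key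

theorem reciprocal_sum_of_squares_satisfies_kummer (σ₁ σ₂ : ℝ) (hσ : σ₁ < σ₂)
    (q u v : ℝ → ℝ)
    (hq : ∀ t ∈ Ioo σ₁ σ₂, DifferentiableAt ℝ q t)
    (hu : ∀ t ∈ Ioo σ₁ σ₂, DifferentiableAt ℝ u t ∧ DifferentiableAt ℝ (deriv u) t)
    (hv : ∀ t ∈ Ioo σ₁ σ₂, DifferentiableAt ℝ v t ∧ DifferentiableAt ℝ (deriv v) t)
    (hueq : ∀ t ∈ Ioo σ₁ σ₂, deriv (deriv u) t + q t * u t = 0)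
    (hveq : ∀ t ∈ Ioo σ₁ σ₂, deriv (deriv v) t + q t * v t = 0)
    (W : ℝ) (hW : 0 < W)
    (hwronsk : ∀ t ∈ Ioo σ₁ σ₂, u t * deriv v t - deriv u t * v t = W) :
    ∀ t ∈ Ioo σ₁ σ₂,
      q t - (W / ((u t) ^ 2 + (v t) ^ 2)) ^ 2
        - (1 / 2) * (deriv (deriv (fun s => W / ((u s) ^ 2 + (v s) ^ 2))) t
            / (W / ((u t) ^ 2 + (v t) ^ 2)))
        + (3 / 4) * (deriv (fun s => W / ((u s) ^ 2 + (v s) ^ 2)) t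
            / (W / ((u t) ^ 2 + (v t) ^ 2))) ^ 2 = 0 := by
  have hS : ∀ s ∈ Ioo σ₁ σ₂, u s ^ 2 + v s ^ 2 ≠ 0 := by
    intro s hs h
    have h1 : u s = 0 := by nlinarith [sq_nonneg (u s), sq_nonneg (v s)]
    have h2 : v s = 0 := by nlinarith [sq_nonneg (u s), sq_nonneg (v s)]
    have hw := hwronsk s hs
    rw [h1, h2] at hw
    simp at hw
    linarith
  -- derivative of S
  have hSder : ∀ s ∈ Ioo σ₁ σ₂, HasDerivAt (fun x => u x ^ 2 + v x ^ 2)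
      (2 * u s * deriv u s + 2 * v s * deriv v s) s := by
    intro s hs
    have hu' := (hu s hs).1.hasDerivAt
    have hv' := (hv s hs).1.hasDerivAt
    have := (hu'.fun_pow 2).fun_add (hv'.fun_pow 2)
    simpa [pow_one, mul_comm, mul_assoc, mul_left_comm] using this
  -- first derivative of p
  have hpder : ∀ s ∈ Ioo σ₁ σ₂, HasDerivAt (fun x => W / (u x ^ 2 + v x ^ 2))
      (-(W * (2 * u s * deriv u s + 2 * v s * deriv v s)) / (u s ^ 2 + v s ^ 2) ^ 2) s := by
    intro s hs
    have := (hasDerivAt_const s W).fun_div (hSder s hs) (hS s hs)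
    refine this.congr_deriv ?_
    ring
  intro t ht
  have hderiv1 : deriv (fun s => W / (u s ^ 2 + v s ^ 2)) t
      = -(W * (2 * u t * deriv u t + 2 * v t * deriv v t)) / (u t ^ 2 + v t ^ 2) ^ 2 :=
    (hpder t ht).deriv
  -- second derivative: deriv p agrees with formula near t
  have hEq : deriv (fun s => W / (u s ^ 2 + v s ^ 2))
      =ᶠ[nhds t] fun s => -(W * (2 * u s * deriv u s + 2 * v s * deriv v s)) / (u s ^ 2 + v s ^ 2) ^ 2 := by
    filter_upwards [isOpen_Ioo.mem_nhds ht] with s hs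
    exact (hpder s hs).deriv
  -- derivative of the formula at t
  have hu' := (hu t ht).1.hasDerivAt
  have hv' := (hv t ht).1.hasDerivAt
  have hu'' := (hu t ht).2.hasDerivAt
  have hv'' := (hv t ht).2.hasDerivAt
  have hNder : HasDerivAt (fun s => -(W * (2 * u s * deriv u s + 2 * v s * deriv v s)))
      (-(W * (2 * deriv u t * deriv u t + 2 * u t * deriv (deriv u) t
        + 2 * deriv v t * deriv v t + 2 * v t * deriv (deriv v) t))) t := by
    have h1 := ((hu'.const_mul 2).fun_mul hu'').fun_add ((hv'.const_mul 2).fun_mul hv'')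
    have h2 := (h1.const_mul W).fun_neg
    refine h2.congr_deriv ?_
    ring
  have hDder : HasDerivAt (fun s => (u s ^ 2 + v s ^ 2) ^ 2)
      (2 * (u t ^ 2 + v t ^ 2) * (2 * u t * deriv u t + 2 * v t * deriv v t)) t := by
    have := (hSder t ht).fun_pow 2
    simpa [pow_one, mul_comm, mul_assoc, mul_left_comm] using this
  have hD2 : ((u t ^ 2 + v t ^ 2) ^ 2) ≠ 0 := pow_ne_zero 2 (hS t ht)
  have hp2der := hNder.div hDder hD2
  have hderiv2 : deriv (deriv (fun s => W / (u s ^ 2 + v s ^ 2))) t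
      = (-(W * (2 * deriv u t * deriv u t + 2 * u t * deriv (deriv u) t
          + 2 * deriv v t * deriv v t + 2 * v t * deriv (deriv v) t))
          * (u t ^ 2 + v t ^ 2) ^ 2
        - -(W * (2 * u t * deriv u t + 2 * v t * deriv v t))
          * (2 * (u t ^ 2 + v t ^ 2) * (2 * u t * deriv u t + 2 * v t * deriv v t)))
        / ((u t ^ 2 + v t ^ 2) ^ 2) ^ 2 := by
    rw [hEq.deriv_eq]
    exact hp2der.deriv
  -- substitute ODEs
  have hu2 : deriv (deriv u) t = -(q t * u t) := by linarith [hueq t ht]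
  have hv2 : deriv (deriv v) t = -(q t * v t) := by linarith [hveq t ht]
  have hw := hwronsk t ht
  have hSne := hS t ht
  have hWne : W ≠ 0 := ne_of_gt hW
  rw [hderiv1, hderiv2, hu2, hv2]
  have key : (deriv u t ^ 2 + deriv v t ^ 2) * (u t ^ 2 + v t ^ 2)
      - (u t * deriv u t + v t * deriv v t) ^ 2 = W ^ 2 := by
    linear_combination (u t * deriv v t - deriv u t * v t + W) * hw
  exact kummer_algebra (u t) (v t) (deriv u t) (deriv v t) (q t) W hSne hWne key
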